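/- Consider P_{ζ,π}(t) = cos(ζ)cos(t) − sin(ζ)cos(3t). If cot(ζ) ≥ 9 (with ζ ∈ (0, π/2)), then t = 0 is the unique global maximum point of P_{ζ,π} in [−π/3, π/3]; if cot(ζ) < 9, then t = 0 is a local minimum and the two solutions t_± ∈ [−π/3, π/3] of 4 sin²(t) = 3 − cot(ζ)/3 are the global maximum points. -/
import Mathlib

open Real

/-- `P_{ζ,π}(t) = cos ζ · cos t − sin ζ · cos(3t)`. -/
noncomputable def PfunPi (ζ t : ℝ) : ℝ :=
  Real.cos ζ * Real.cos t - Real.sin ζ * Real.cos (3 * t)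

lemma PfunPi_eq (ζ t : ℝ) :
    PfunPi ζ t = Real.cos ζ * Real.cos t
      - Real.sin ζ * (4 * Real.cos t ^ 3 - 3 * Real.cos t) := by
  rw [PfunPi, Real.cos_three_mul]

lemma cos_mem_of_mem (t : ℝ) (ht : t ∈ Set.Icc (-(π / 3)) (π / 3)) :
    1 / 2 ≤ Real.cos t ∧ Real.cos t ≤ 1 := by
  refine ⟨?_, Real.cos_le_one t⟩
  have h1 : Real.cos t = Real.cos |t| := (Real.cos_abs t).symm
  have h2 : |t| ≤ π / 3 := abs_le.mpr ⟨ht.1, ht.2⟩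
  have := Real.cos_le_cos_of_nonneg_of_le_pi (abs_nonneg t)
    (by linarith [Real.pi_pos]) h2
  rw [Real.cos_pi_div_three] at this
  linarith [h1 ▸ this]

/-- For `ζ ∈ (0, π/2)`: if `cot ζ ≥ 9`, then `t = 0` is the unique global maximum point of
`P_{ζ,π}` on `[−π/3, π/3]`; if `cot ζ < 9`, then `t = 0` is a local minimum and the two
solutions `t_± ∈ [−π/3, π/3]` of `4 sin² t = 3 − cot(ζ)/3` are the global maximum points. -/
theorem stmt13 (ζ : ℝ) (hζ : ζ ∈ Set.Ioo (0 : ℝ) (π / 2)) :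
    (9 ≤ Real.cot ζ →
      (∀ t ∈ Set.Icc (-(π / 3)) (π / 3), PfunPi ζ t ≤ PfunPi ζ 0) ∧
      (∀ t ∈ Set.Icc (-(π / 3)) (π / 3),
        (∀ u ∈ Set.Icc (-(π / 3)) (π / 3), PfunPi ζ u ≤ PfunPi ζ t) → t = 0)) ∧
    (Real.cot ζ < 9 →
      (∃ ε > (0 : ℝ), ∀ t : ℝ, |t| < ε → PfunPi ζ 0 ≤ PfunPi ζ t) ∧
      (∃ t ∈ Set.Icc (-(π / 3)) (π / 3), 0 < t ∧
        4 * Real.sin t ^ 2 = 3 - Real.cot ζ / 3) ∧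
      (∀ t ∈ Set.Icc (-(π / 3)) (π / 3), 4 * Real.sin t ^ 2 = 3 - Real.cot ζ / 3 →
        ∀ u ∈ Set.Icc (-(π / 3)) (π / 3), PfunPi ζ u ≤ PfunPi ζ t)) := by
  obtain ⟨hζ0, hζπ⟩ := hζ
  have hπ := Real.pi_pos
  have hS : 0 < Real.sin ζ := Real.sin_pos_of_pos_of_lt_pi hζ0 (by linarith)
  have hC : 0 < Real.cos ζ := Real.cos_pos_of_mem_Ioo ⟨by linarith, hζπ⟩
  set κ := Real.cot ζ with hκdef
  have hκ : Real.cos ζ = κ * Real.sin ζ := by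
    rw [hκdef, Real.cot_eq_cos_div_sin]
    field_simp
  have hκpos : 0 < κ := by
    rw [hκdef, Real.cot_eq_cos_div_sin]
    positivity
  -- P ζ t = sin ζ * ((κ + 3) * cos t - 4 * cos t ^ 3)
  have hP : ∀ t, PfunPi ζ t = Real.sin ζ * ((κ + 3) * Real.cos t - 4 * Real.cos t ^ 3) := by
    intro t
    rw [PfunPi_eq, hκ]; ring
  have hP0 : PfunPi ζ 0 = Real.sin ζ * (κ - 1) := by
    rw [hP, Real.cos_zero]; ring
  constructor
  · intro h9
    have key : ∀ c : ℝ, 1 / 2 ≤ c → c ≤ 1 →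
        (κ + 3) * c - 4 * c ^ 3 ≤ κ - 1 := by
      intro c h1 h2
      nlinarith [sq_nonneg (1 - c), mul_nonneg (sub_nonneg.2 h2) (sub_nonneg.2 h2)]
    constructor
    · intro t ht
      obtain ⟨h1, h2⟩ := cos_mem_of_mem t ht
      rw [hP, hP0]
      exact mul_le_mul_of_nonneg_left (key _ h1 h2) hS.le
    · intro t ht hmax
      obtain ⟨h1, h2⟩ := cos_mem_of_mem t ht
      have h0mem : (0 : ℝ) ∈ Set.Icc (-(π / 3)) (π / 3) := by
        constructor <;> [linarith; linarith]
      have := hmax 0 h0mem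
      rw [hP 0, hP t, Real.cos_zero] at this
      have hge : κ - 1 ≤ (κ + 3) * Real.cos t - 4 * Real.cos t ^ 3 := by
        have := le_of_mul_le_mul_left this hS
        nlinarith
      have hc1 : Real.cos t = 1 := by
        by_contra hne
        have hlt : Real.cos t < 1 := lt_of_le_of_ne h2 hne
        nlinarith [mul_pos (sub_pos.2 hlt) (show (0:ℝ) < κ - 1 - 4 * Real.cos t - 4 * Real.cos t ^ 2 by nlinarith)]
      -- cos t = 1 with |t| ≤ π/3 forces t = 0
      have habs : |t| ≤ π / 3 := abs_le.mpr ⟨ht.1, ht.2⟩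
      by_contra hne
      have hlt : Real.cos |t| < 1 := by
        have h0 : 0 < |t| := abs_pos.mpr hne
        have := Real.cos_lt_cos_of_nonneg_of_le_pi (le_refl 0)
          (by linarith : |t| ≤ π) h0
        rwa [Real.cos_zero] at this
      rw [Real.cos_abs, hc1] at hlt
      exact absurd hlt (lt_irrefl 1)
  · intro h9
    refine ⟨?_, ?_, ?_⟩
    · -- local minimum at 0
      refine ⟨Real.sqrt ((9 - κ) / 6), Real.sqrt_pos.mpr (by linarith), ?_⟩
      intro t ht
      have ht2 : t ^ 2 < (9 - κ) / 6 := by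
        have := Real.sq_sqrt (show (0:ℝ) ≤ (9 - κ) / 6 by linarith)
        nlinarith [abs_nonneg t, sq_abs t, Real.sqrt_nonneg ((9 - κ) / 6)]
      have hcb : 1 - t ^ 2 / 2 ≤ Real.cos t := Real.one_sub_sq_div_two_le_cos
      have hc1 : Real.cos t ≤ 1 := Real.cos_le_one t
      set c := Real.cos t with hc
      have hclow : 1 - (9 - κ) / 12 < c := by nlinarith
      rw [hP 0, hP t, Real.cos_zero]
      have : (κ + 3) * 1 - 4 * 1 ^ 3 ≤ (κ + 3) * c - 4 * c ^ 3 := by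
        nlinarith [sq_nonneg (1 - c), mul_nonneg (sub_nonneg.2 hc1) (sub_nonneg.2 hc1)]
      exact mul_le_mul_of_nonneg_left this hS.le
    · -- existence of positive solution
      set r := Real.sqrt ((3 - κ / 3) / 4) with hr
      have hs2pos : 0 < (3 - κ / 3) / 4 := by linarith
      have hrpos : 0 < r := Real.sqrt_pos.mpr hs2pos
      have hr2 : r ^ 2 = (3 - κ / 3) / 4 := Real.sq_sqrt hs2pos.le
      have hsin3 : Real.sin (π / 3) = Real.sqrt (3 / 4) := by
        have h1 : Real.sin (π / 3) ^ 2 = 3 / 4 := Real.sq_sin_pi_div_three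
        have h2 : 0 ≤ Real.sin (π / 3) := by
          rw [Real.sin_pi_div_three]; positivity
        rw [← h1, Real.sqrt_sq h2]
      have hrle : r ≤ Real.sin (π / 3) := by
        rw [hsin3, hr]
        exact Real.sqrt_le_sqrt (by linarith)
      have hr1 : r ≤ 1 := hrle.trans (Real.sin_le_one _)
      refine ⟨Real.arcsin r, ⟨?_, ?_⟩, Real.arcsin_pos.mpr hrpos, ?_⟩
      · have := Real.arcsin_pos.mpr hrpos
        linarith
      · calc Real.arcsin r ≤ Real.arcsin (Real.sin (π / 3)) := Real.monotone_arcsin hrle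
          _ = π / 3 := Real.arcsin_sin (by linarith) (by linarith)
      · rw [Real.sin_arcsin (by linarith) hr1]
        rw [hr2]; ring
    · -- maximizers
      intro t ht hsol u hu
      obtain ⟨hc1, hc2⟩ := cos_mem_of_mem t ht
      obtain ⟨hu1, hu2⟩ := cos_mem_of_mem u hu
      set c := Real.cos t
      set cu := Real.cos u
      have hcsq : 12 * c ^ 2 = κ + 3 := by
        have := Real.sin_sq_add_cos_sq t
        nlinarith
      rw [hP, hP]
      have : (κ + 3) * cu - 4 * cu ^ 3 ≤ (κ + 3) * c - 4 * c ^ 3 := by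
        nlinarith [sq_nonneg (c - cu), mul_nonneg (sq_nonneg (c - cu)) (show (0:ℝ) ≤ 2 * c + cu by linarith)]
      exact mul_le_mul_of_nonneg_left this hS.le
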